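/- Sparse online regret bound (Theorem 1): Under the convexity and gradient-bound assumption (‖∇₁L(w,z)‖² ≤ A·L(w,z)+B), the truncated gradient updates w_{i+1} = T₁(w_i - η∇₁L(w_i, z_i), g_iη, θ) with w₁ = 0 satisfy, for all w̄ ∈ ℝᵈ: (1-0.5Aη)/T · Σ_{i=1}^T [L(w_i, z_i) + g_i/(1-0.5Aη) · ‖w_{i+1}·I(|w_{i+1}| ≤ θ)‖₁] ≤ (η/2)B + ‖w̄‖²/(2ηT) + (1/T)·Σ_{i=1}^T [L(w̄, z_i) + g_i·‖w̄·I(|w_{i+1}| ≤ θ)‖₁]. -/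

import Mathlib

open Finset

/-- Truncation operator with threshold `θ` and shrinkage `α`. -/
noncomputable def T1 (v α θ : ℝ) : ℝ :=
  if 0 ≤ v ∧ v ≤ θ then max 0 (v - α)
  else if -θ ≤ v ∧ v ≤ 0 then min 0 (v + α)
  else v

lemma T1_key (u x α θ : ℝ) (hα : 0 ≤ α) (hαθ : α ≤ θ) :
    (T1 u α θ - x)^2 + 2*α*(|T1 u α θ| * (if |T1 u α θ| ≤ θ then (1:ℝ) else 0))
      ≤ (u - x)^2 + 2*α*(|x| * (if |T1 u α θ| ≤ θ then (1:ℝ) else 0)) := by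
  have hθ : 0 ≤ θ := le_trans hα hαθ
  unfold T1
  by_cases h1 : 0 ≤ u ∧ u ≤ θ
  · rw [if_pos h1]
    rcases le_total α u with h | h
    · have hmax : max 0 (u - α) = u - α := max_eq_right (by linarith)
      rw [hmax]
      have habs : |u - α| = u - α := abs_of_nonneg (by linarith)
      rw [habs, if_pos (by linarith [h1.2])]
      nlinarith [mul_nonneg hα (sub_nonneg.mpr (le_abs_self x)), sq_nonneg α]
    · have hmax : max 0 (u - α) = 0 := max_eq_left (by linarith)
      rw [hmax]
      simp only [abs_zero]
      rw [if_pos hθ]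
      nlinarith [mul_le_mul_of_nonneg_right h (abs_nonneg x),
        mul_le_mul_of_nonneg_left (le_abs_self x) h1.1, sq_nonneg u]
  · by_cases h2 : -θ ≤ u ∧ u ≤ 0
    · rw [if_neg h1, if_pos h2]
      rcases le_total u (-α) with h | h
      · have hmin : min 0 (u + α) = u + α := min_eq_right (by linarith)
        rw [hmin]
        have habs : |u + α| = -(u+α) := abs_of_nonpos (by linarith)
        rw [habs, if_pos (by linarith [h2.1])]
        nlinarith [mul_nonneg hα (by linarith [neg_abs_le x] : (0:ℝ) ≤ x + |x|), sq_nonneg α]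
      · have hmin : min 0 (u + α) = 0 := min_eq_left (by linarith)
        rw [hmin]
        simp only [abs_zero]
        rw [if_pos hθ]
        nlinarith [mul_le_mul_of_nonneg_right (by linarith : -u ≤ α) (abs_nonneg x),
          mul_le_mul_of_nonneg_left (neg_abs_le x) (by linarith : (0:ℝ) ≤ -u), sq_nonneg u]
    · rw [if_neg h1, if_neg h2]
      have hno : ¬ |u| ≤ θ := by
        intro hle
        rcases le_total 0 u with h | h
        · exact h1 ⟨h, by rwa [abs_of_nonneg h] at hle⟩
        · exact h2 ⟨by rw [abs_of_nonpos h] at hle; linarith, h⟩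
      rw [if_neg hno]
      simp

/-- Sparse online regret bound for truncated gradient (Theorem 1).
`L i` is the loss on example `z_i`, `grad i` a subgradient of `L i` at `w i`. -/
theorem sparse_online_regret (d T : ℕ) (hT : 0 < T)
    (L : ℕ → (Fin d → ℝ) → ℝ) (grad : ℕ → Fin d → ℝ)
    (w : ℕ → Fin d → ℝ) (g : ℕ → ℝ)
    (A B η θ : ℝ) (hA : 0 ≤ A) (hB : 0 ≤ B) (hη : 0 < η) (hAη : A * η < 2)
    (hg : ∀ i, 0 ≤ g i) (hgθ : ∀ i, g i * η ≤ θ)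
    (hw1 : ∀ j, w 1 j = 0)
    (hsub : ∀ i ∈ Finset.Icc 1 T, ∀ v : Fin d → ℝ,
      ∑ j, (v j - w i j) * grad i j ≤ L i v - L i (w i))
    (hgrad : ∀ i ∈ Finset.Icc 1 T, ∑ j, (grad i j) ^ 2 ≤ A * L i (w i) + B)
    (hupdate : ∀ i ∈ Finset.Icc 1 T, ∀ j,
      w (i + 1) j = T1 (w i j - η * grad i j) (g i * η) θ)
    (wbar : Fin d → ℝ) :
    (1 - 0.5 * A * η) / T *
        ∑ i ∈ Finset.Icc 1 T,
          (L i (w i) + g i / (1 - 0.5 * A * η) *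
            ∑ j, |w (i + 1) j| * (if |w (i + 1) j| ≤ θ then (1 : ℝ) else 0))
      ≤ (η / 2) * B + (∑ j, (wbar j) ^ 2) / (2 * η * T)
        + (1 / T) * ∑ i ∈ Finset.Icc 1 T,
            (L i wbar + g i *
              ∑ j, |wbar j| * (if |w (i + 1) j| ≤ θ then (1 : ℝ) else 0)) := by
  have hr : (0:ℝ) < 1 - 0.5 * A * η := by nlinarith
  have hT' : (0:ℝ) < T := by exact_mod_cast hT
  set Φ : ℕ → ℝ := fun i => ∑ j, (w i j - wbar j)^2 with hΦ
  set S : ℕ → ℝ := fun i => ∑ j, |w (i + 1) j| * (if |w (i + 1) j| ≤ θ then (1:ℝ) else 0) with hS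
  set Sb : ℕ → ℝ := fun i => ∑ j, |wbar j| * (if |w (i + 1) j| ≤ θ then (1:ℝ) else 0) with hSb
  -- per-step inequality
  have hstep : ∀ i ∈ Finset.Icc 1 T,
      2*η*((1 - 0.5*A*η) * L i (w i) + g i * S i)
        ≤ (Φ i - Φ (i+1)) + (2*η*(L i wbar + g i * Sb i) + η^2 * B) := by
    intro i hi
    have hsumT1 : ∑ j, ((w (i+1) j - wbar j)^2
          + 2*(g i * η)*(|w (i+1) j| * (if |w (i+1) j| ≤ θ then (1:ℝ) else 0)))
        ≤ ∑ j, ((w i j - η * grad i j - wbar j)^2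
          + 2*(g i * η)*(|wbar j| * (if |w (i+1) j| ≤ θ then (1:ℝ) else 0))) := by
      apply Finset.sum_le_sum
      intro j _
      have h := T1_key (w i j - η * grad i j) (wbar j) (g i * η) θ
        (mul_nonneg (hg i) hη.le) (hgθ i)
      rw [← hupdate i hi j] at h
      exact h
    have hsplit1 : ∑ j, ((w (i+1) j - wbar j)^2
          + 2*(g i * η)*(|w (i+1) j| * (if |w (i+1) j| ≤ θ then (1:ℝ) else 0)))
        = Φ (i+1) + 2*(g i * η) * S i := by
      rw [Finset.sum_add_distrib, ← Finset.mul_sum]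
    have hsplit2 : ∑ j, ((w i j - η * grad i j - wbar j)^2
          + 2*(g i * η)*(|wbar j| * (if |w (i+1) j| ≤ θ then (1:ℝ) else 0)))
        = (∑ j, (w i j - η * grad i j - wbar j)^2) + 2*(g i * η) * Sb i := by
      rw [Finset.sum_add_distrib, ← Finset.mul_sum]
    have hexpand : ∑ j, (w i j - η * grad i j - wbar j)^2
        = Φ i + 2*η*(∑ j, (wbar j - w i j) * grad i j) + η^2 * (∑ j, (grad i j)^2) := by
      simp only [hΦ, Finset.mul_sum, ← Finset.sum_add_distrib]
      exact Finset.sum_congr rfl fun j _ => by ring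
    have h1 : 2*η*(∑ j, (wbar j - w i j) * grad i j) ≤ 2*η*(L i wbar - L i (w i)) :=
      mul_le_mul_of_nonneg_left (hsub i hi wbar) (by positivity)
    have h2 : η^2 * (∑ j, (grad i j)^2) ≤ η^2 * (A * L i (w i) + B) :=
      mul_le_mul_of_nonneg_left (hgrad i hi) (sq_nonneg η)
    rw [hsplit1, hsplit2] at hsumT1
    nlinarith [hsumT1, hexpand, h1, h2]
  -- telescoping
  have tele : ∀ n : ℕ, ∑ i ∈ Finset.Icc 1 n, (Φ i - Φ (i+1)) = Φ 1 - Φ (n+1) := by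
    intro n
    induction n with
    | zero => simp
    | succ k ih => rw [Finset.sum_Icc_succ_top (by omega), ih]; ring
  have hsum : ∑ i ∈ Finset.Icc 1 T, 2*η*((1 - 0.5*A*η) * L i (w i) + g i * S i)
      ≤ (Φ 1 - Φ (T+1)) + ∑ i ∈ Finset.Icc 1 T, (2*η*(L i wbar + g i * Sb i) + η^2 * B) := by
    calc ∑ i ∈ Finset.Icc 1 T, 2*η*((1 - 0.5*A*η) * L i (w i) + g i * S i)
        ≤ ∑ i ∈ Finset.Icc 1 T, ((Φ i - Φ (i+1)) + (2*η*(L i wbar + g i * Sb i) + η^2 * B)) :=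
          Finset.sum_le_sum hstep
      _ = (Φ 1 - Φ (T+1)) + ∑ i ∈ Finset.Icc 1 T, (2*η*(L i wbar + g i * Sb i) + η^2 * B) := by
          rw [Finset.sum_add_distrib, tele T]
  have hΦ1 : Φ 1 = ∑ j, (wbar j)^2 := by
    simp only [hΦ]
    exact Finset.sum_congr rfl fun j _ => by rw [hw1 j]; ring
  have hΦT : 0 ≤ Φ (T+1) := Finset.sum_nonneg fun j _ => sq_nonneg _
  have hconst : ∑ i ∈ Finset.Icc 1 T, (2*η*(L i wbar + g i * Sb i) + η^2 * B)
      = (∑ i ∈ Finset.Icc 1 T, 2*η*(L i wbar + g i * Sb i)) + T * (η^2 * B) := by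
    rw [Finset.sum_add_distrib, Finset.sum_const, Nat.card_Icc]
    simp
  -- rewrite LHS
  have hLHS : ∀ i, L i (w i) + g i / (1 - 0.5*A*η) * S i
      = ((1 - 0.5*A*η) * L i (w i) + g i * S i) / (1 - 0.5*A*η) := by
    intro i
    field_simp
  have hX : (1 - 0.5 * A * η) / T * ∑ i ∈ Finset.Icc 1 T,
        (L i (w i) + g i / (1 - 0.5 * A * η) * S i)
      = (1/T) * ∑ i ∈ Finset.Icc 1 T, ((1 - 0.5*A*η) * L i (w i) + g i * S i) := by
    rw [Finset.mul_sum, Finset.mul_sum]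
    apply Finset.sum_congr rfl
    intro i _
    rw [hLHS i]
    field_simp
  rw [hX]
  set X := ∑ i ∈ Finset.Icc 1 T, ((1 - 0.5*A*η) * L i (w i) + g i * S i) with hXdef
  set Y := ∑ i ∈ Finset.Icc 1 T, (L i wbar + g i * Sb i) with hYdef
  have hXY : 2*η*X ≤ (∑ j, (wbar j)^2) + 2*η*Y + T*(η^2*B) := by
    have e1 : ∑ i ∈ Finset.Icc 1 T, 2*η*((1 - 0.5*A*η) * L i (w i) + g i * S i) = 2*η*X := by
      rw [hXdef, Finset.mul_sum]
    have e2 : ∑ i ∈ Finset.Icc 1 T, 2*η*(L i wbar + g i * Sb i) = 2*η*Y := by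
      rw [hYdef, Finset.mul_sum]
    rw [e1] at hsum
    rw [hconst, e2, hΦ1] at hsum
    linarith
  have h2ηT : (0:ℝ) < 2*η*(T:ℝ) := by positivity
  have hnum : 0 ≤ ((∑ j, (wbar j)^2) + 2*η*Y + (T:ℝ)*(η^2*B) - 2*η*X) := by linarith
  have hfrac : 0 ≤ ((∑ j, (wbar j)^2) + 2*η*Y + (T:ℝ)*(η^2*B) - 2*η*X)/(2*η*(T:ℝ)) :=
    div_nonneg hnum h2ηT.le
  have e : ((∑ j, (wbar j)^2) + 2*η*Y + (T:ℝ)*(η^2*B) - 2*η*X)/(2*η*(T:ℝ))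
      = η/2*B + (∑ j, (wbar j)^2)/(2*η*(T:ℝ)) + 1/(T:ℝ)*Y - 1/(T:ℝ)*X := by
    field_simp
    ring
  rw [e] at hfrac
  linarith
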